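/- Let d, K ∈ ℕ with K ≥ 1, let ν be a probability measure on (Fin d → ℝ), let f : (Fin d → ℝ) → ℕ be measurable, let ŷ ∈ ℕ, let x, r : Fin K → (Fin d → ℝ), let W ∈ [0,1] and τ ∈ ℝ. For each k, let μ₀ᵏ := Measure.map (fun ε => x k + r k + ε) ν and μ₁ᵏ := Measure.map (fun ε => x k + ε) ν. Suppose (i) for every k, (μ₀ᵏ (f ⁻¹' {ŷ})).toReal ≥ W, and (ii) for every k, β₂*(1 − W; μ₀ᵏ, μ₁ᵏ) > τ. Then for every k, (μ₁ᵏ (f ⁻¹' {ŷ})).toReal > τ; in particular the stability S := min over k of ν {ε | f (x k + ε) = ŷ} satisfies S > τ. -/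

import Mathlib

open MeasureTheory

/-- The optimal type-II error at type-I level `α` for testing the null `μ₀`
against the alternative `μ₁`. -/
noncomputable def beta2Star {Ω : Type*} [MeasurableSpace Ω]
    (α : ℝ) (μ₀ μ₁ : Measure Ω) : ℝ :=
  ⨅ φ : {φ : Ω → ℝ // Measurable φ ∧ (∀ x, 0 ≤ φ x ∧ φ x ≤ 1) ∧ ∫ x, φ x ∂μ₀ ≤ α},
    ∫ x, (1 - φ.1 x) ∂μ₁

/-- Theorem 1 (General Condition of Certified Dataset Watermarking). -/
theorem general_condition_certified_watermarking
    {d K : ℕ} (hK : 1 ≤ K)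
    (ν : Measure (Fin d → ℝ)) [IsProbabilityMeasure ν]
    (f : (Fin d → ℝ) → ℕ) (hf : Measurable f) (yhat : ℕ)
    (x r : Fin K → (Fin d → ℝ))
    (W : ℝ) (hW : W ∈ Set.Icc (0 : ℝ) 1) (τ : ℝ)
    (μ₀ μ₁ : Fin K → Measure (Fin d → ℝ))
    (hμ₀ : ∀ k, μ₀ k = Measure.map (fun ε => x k + r k + ε) ν)
    (hμ₁ : ∀ k, μ₁ k = Measure.map (fun ε => x k + ε) ν)
    (hWR : ∀ k, ((μ₀ k) (f ⁻¹' {yhat})).toReal ≥ W)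
    (hβ : ∀ k, beta2Star (1 - W) (μ₀ k) (μ₁ k) > τ) :
    (∀ k, ((μ₁ k) (f ⁻¹' {yhat})).toReal > τ) ∧
      (⨅ k : Fin K, (ν {ε | f (x k + ε) = yhat}).toReal) > τ := by
  have hA : MeasurableSet (f ⁻¹' {yhat}) := hf (measurableSet_singleton _)
  set A := f ⁻¹' {yhat} with hAdef
  have hmain : ∀ k, ((μ₁ k) A).toReal > τ := by
    intro k
    haveI : IsProbabilityMeasure (μ₀ k) := by
      rw [hμ₀ k]
      exact Measure.isProbabilityMeasure_map ((measurable_const.add measurable_id).aemeasurable)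
    haveI : IsProbabilityMeasure (μ₁ k) := by
      rw [hμ₁ k]
      exact Measure.isProbabilityMeasure_map ((measurable_const.add measurable_id).aemeasurable)
    set φ : (Fin d → ℝ) → ℝ := Aᶜ.indicator (fun _ => (1:ℝ)) with hφdef
    have hφmeas : Measurable φ := measurable_const.indicator hA.compl
    have hφbd : ∀ ω, 0 ≤ φ ω ∧ φ ω ≤ 1 := by
      intro ω; simp only [hφdef, Set.indicator]; split_ifs <;> norm_num
    have hint0 : ∫ ω, φ ω ∂(μ₀ k) = ((μ₀ k) Aᶜ).toReal := by
      rw [hφdef]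
      exact integral_indicator_one (μ := μ₀ k) hA.compl
    have hcompl : ((μ₀ k) Aᶜ).toReal = 1 - ((μ₀ k) A).toReal := by
      rw [prob_compl_eq_one_sub hA, ENNReal.toReal_sub_of_le prob_le_one (by simp)]
      simp
    have hlev : ∫ ω, φ ω ∂(μ₀ k) ≤ 1 - W := by
      rw [hint0, hcompl]; linarith [hWR k]
    have hint1 : ∫ ω, (1 - φ ω) ∂(μ₁ k) = ((μ₁ k) A).toReal := by
      have : (fun ω => 1 - φ ω) = A.indicator (fun _ => (1:ℝ)) := by
        funext ω
        by_cases h : ω ∈ A <;>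
          simp [hφdef, Set.indicator, h]
      rw [this]
      exact integral_indicator_one (μ := μ₁ k) hA
    have hle : beta2Star (1 - W) (μ₀ k) (μ₁ k) ≤ ((μ₁ k) A).toReal := by
      rw [← hint1]
      exact ciInf_le
        ⟨0, by
          rintro b ⟨ψ, rfl⟩
          exact integral_nonneg (fun ω => by simpa using sub_nonneg.mpr (ψ.2.2.1 ω).2)⟩
        (⟨φ, hφmeas, hφbd, hlev⟩ : {ψ : (Fin d → ℝ) → ℝ // Measurable ψ ∧ (∀ x, 0 ≤ ψ x ∧ ψ x ≤ 1) ∧ ∫ x, ψ x ∂(μ₀ k) ≤ 1 - W})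
    linarith [hβ k]
  have heq : ∀ k, (ν {ε | f (x k + ε) = yhat}).toReal = ((μ₁ k) A).toReal := by
    intro k
    rw [hμ₁ k, Measure.map_apply (measurable_const_add (x k)) hA]
    rfl
  refine ⟨hmain, ?_⟩
  haveI : Nonempty (Fin K) := ⟨⟨0, hK⟩⟩
  obtain ⟨k, hk⟩ := exists_eq_ciInf_of_finite (f := fun k => (ν {ε | f (x k + ε) = yhat}).toReal)
  rw [← hk, heq k]
  exact hmain k
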